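/- Let E be a real inner product space and let g1, g2 ∈ E be nonzero vectors with ⟪g1,g2⟫ < 0 and ⟪g1,g2⟫² < ‖g1‖²·‖g2‖² (i.e., g1 and g2 are not antiparallel). Define g̃1 = g1 - (⟪g1,g2⟫/‖g2‖²)·g2 and g̃2 = g2 - (⟪g1,g2⟫/‖g1‖²)·g1. Then ⟪g̃1, g̃2⟫ > 0; that is, GH turns a conflicting (obtuse) pair of gradients into a positively correlated (acute) pair. -/

import Mathlib

open scoped RealInnerProductSpace

/-- Central claim of Gradient Harmonization: for nonzero, non-antiparallel `g1, g2` in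
conflict (`⟪g1,g2⟫ < 0` and `⟪g1,g2⟫² < ‖g1‖²*‖g2‖²`), the harmonized gradients
`g̃1 = g1 - (⟪g1,g2⟫/‖g2‖²) • g2` and `g̃2 = g2 - (⟪g1,g2⟫/‖g1‖²) • g1` are
positively correlated: `⟪g1t, g2t⟫ > 0`. -/
theorem gh_harmonized_pos_inner {E : Type*} [NormedAddCommGroup E] [InnerProductSpace ℝ E]
    (g1 g2 : E) (hg1 : g1 ≠ 0) (hg2 : g2 ≠ 0) (hconf : ⟪g1, g2⟫ < 0)
    (hstrict : ⟪g1, g2⟫ ^ 2 < ‖g1‖ ^ 2 * ‖g2‖ ^ 2)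
    (g1t g2t : E)
    (hg1t : g1t = g1 - (⟪g1, g2⟫ / ‖g2‖ ^ 2) • g2)
    (hg2t : g2t = g2 - (⟪g1, g2⟫ / ‖g1‖ ^ 2) • g1) :
    0 < ⟪g1t, g2t⟫ := by
  have ha : (0:ℝ) < ‖g1‖ ^ 2 := pow_pos (norm_pos_iff.mpr hg1) 2
  have hb : (0:ℝ) < ‖g2‖ ^ 2 := pow_pos (norm_pos_iff.mpr hg2) 2
  have h11 : ⟪g1, g1⟫ = ‖g1‖ ^ 2 := real_inner_self_eq_norm_sq g1
  have h22 : ⟪g2, g2⟫ = ‖g2‖ ^ 2 := real_inner_self_eq_norm_sq g2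
  have h21 : ⟪g2, g1⟫ = ⟪g1, g2⟫ := real_inner_comm g1 g2
  have key : ⟪g1t, g2t⟫ = ⟪g1, g2⟫ * (⟪g1, g2⟫ ^ 2 - ‖g1‖ ^ 2 * ‖g2‖ ^ 2)
      / (‖g1‖ ^ 2 * ‖g2‖ ^ 2) := by
    rw [hg1t, hg2t]
    simp only [inner_sub_sub_self, inner_sub_left, inner_sub_right, inner_smul_left,
      inner_smul_right, real_inner_smul_left, real_inner_smul_right, h11, h22, h21, conj_trivial]
    field_simp
    ring
  rw [key]
  have hnum : 0 < ⟪g1, g2⟫ * (⟪g1, g2⟫ ^ 2 - ‖g1‖ ^ 2 * ‖g2‖ ^ 2) :=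
    mul_pos_of_neg_of_neg hconf (by linarith)
  positivity
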